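/- Let μ ∈ D(B) and f ∈ B. Then f = 0 μ-almost everywhere on X if and only if f̂ = 0 μ̂-almost everywhere on Δ. -/

import Mathlib

open MeasureTheory Filter Topology BoundedContinuousFunction
open scoped ZeroAtInfty ENNReal

/-- The complexification of a bounded real-valued function: we regard a bounded real
function on `X` as a bounded complex function. (`X` carries the discrete topology, so
`X →ᵇ ℝ` is exactly the space of bounded real-valued functions on `X`.) -/
noncomputable def cplx {X : Type*} [TopologicalSpace X] (f : X →ᵇ ℝ) : X →ᵇ ℂ :=
  BoundedContinuousFunction.comp Complex.ofReal Complex.isometry_ofReal.lipschitz f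

/-- `A(B)`: the closure, in the supremum norm, of the complexification `B + iB` of a
set `B` of bounded real-valued functions, inside the C*-algebra of all bounded
complex-valued functions on `X`. -/
noncomputable def AofB {X : Type*} [TopologicalSpace X] (B : Set (X →ᵇ ℝ)) : Set (X →ᵇ ℂ) :=
  closure {a : X →ᵇ ℂ | ∃ f ∈ B, ∃ g ∈ B, a = cplx f + Complex.I • cplx g}
lemma cplx_apply {X : Type*} [TopologicalSpace X] (f : X →ᵇ ℝ) (x : X) :
    cplx f x = (f x : ℂ) := rfl

/-- Let `μ ∈ D(B)` with transferred Radon measure `ν = μ̂` on `Δ`, and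
let `f ∈ B`.  Then `f = 0` `μ`-a.e. on `X` if and only if `f̂ = 0` `ν`-a.e. on `Δ`. -/
theorem ae_zero_iff_gelfand_ae_zero {X : Type*} [Nonempty X] [TopologicalSpace X] [DiscreteTopology X]
    (B : Set (X →ᵇ ℝ))
    (hBadd : ∀ f ∈ B, ∀ g ∈ B, f + g ∈ B)
    (hBsmul : ∀ (c : ℝ), ∀ f ∈ B, c • f ∈ B)
    (hBmax : ∀ f ∈ B, ∀ g ∈ B, ∃ h ∈ B, ∀ x, h x = max (f x) (g x))
    (hBmin : ∀ f ∈ B, ∀ g ∈ B, ∃ h ∈ B, ∀ x, h x = min (f x) (g x))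
    (hBmul : ∀ f ∈ B, ∀ g ∈ B, f * g ∈ B)
    (hBstone : ∀ f ∈ B, ∃ h ∈ B, ∀ x, h x = min (f x) 1)
    (hBnv : ∀ x : X, ∃ f ∈ B, f x ≠ 0)
    {Δ : Type*} [TopologicalSpace Δ] [LocallyCompactSpace Δ] [T2Space Δ]
    [MeasurableSpace Δ] [BorelSpace Δ]
    (ι : X → Δ) (hι : DenseRange ι)
    (G : (X →ᵇ ℂ) → C₀(Δ, ℂ))
    (hGeval : ∀ a ∈ AofB B, ∀ x : X, G a (ι x) = a x)
    (hGsurj : ∀ h : C₀(Δ, ℂ), ∃ a ∈ AofB B, G a = h)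
    {mX : MeasurableSpace X}
    (hmX : mX = ⨆ f ∈ B, MeasurableSpace.comap (⇑f : X → ℝ) inferInstance)
    (μ : Measure X) (hμ : ∀ f ∈ B, Integrable (⇑f) μ)
    (ν : Measure Δ) (hνreg : ν.Regular)
    (hν : ∀ f ∈ B, Integrable (fun φ => ((G (cplx f)) φ).re) ν ∧
      ∫ x, f x ∂μ = ∫ φ, ((G (cplx f)) φ).re ∂ν)
    (f : X →ᵇ ℝ) (hf : f ∈ B) :
    (∀ᵐ x ∂μ, f x = 0) ↔ ∀ᵐ φ ∂ν, (G (cplx f)) φ = 0 := by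
  obtain ⟨x0⟩ := ‹Nonempty X›
  obtain ⟨f0, hf0, -⟩ := hBnv x0
  have h0B : (0 : X →ᵇ ℝ) ∈ B := by
    have := hBsmul 0 f0 hf0; simpa using this
  have hnegf : -f ∈ B := by
    have := hBsmul (-1) f hf
    have e : (-1 : ℝ) • f = -f := by ext x; simp
    rwa [e] at this
  obtain ⟨h, hhB, hhx⟩ := hBmax f hf (-f) hnegf
  have habs : ∀ x, h x = |f x| := fun x => by
    rw [hhx]; simp [abs_eq_max_neg]
  have hmem : ∀ g ∈ B, cplx g ∈ AofB B := fun g hg => by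
    apply subset_closure
    refine ⟨g, hg, 0, h0B, ?_⟩
    ext x
    simp [cplx_apply]
  have hkey : ∀ φ, (G (cplx h)) φ = ((‖(G (cplx f)) φ‖ : ℝ) : ℂ) := by
    have hext := hι.equalizer (map_continuous (G (cplx h)))
      (Complex.continuous_ofReal.comp
        (continuous_norm.comp (map_continuous (G (cplx f)))))
      (funext fun x => by
        have h1 : (G (cplx h)) (ι x) = cplx h x := hGeval _ (hmem h hhB) x
        have h2 : (G (cplx f)) (ι x) = cplx f x := hGeval _ (hmem f hf) x
        simp only [Function.comp_apply, h1, h2]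
        show ((h x : ℝ) : ℂ) = _
        rw [habs x]
        simp [cplx_apply])
    exact fun φ => congrFun hext φ
  have hre : (fun φ => ((G (cplx h)) φ).re) = fun φ => ‖(G (cplx f)) φ‖ := by
    funext φ; rw [hkey φ]; exact Complex.ofReal_re _
  have hInt_h : Integrable (fun x => h x) μ := hμ h hhB
  have hh_nonneg : (0 : X → ℝ) ≤ fun x => h x := fun x => by
    simp only [Pi.zero_apply]; rw [habs]; exact abs_nonneg _
  have e1 : (∀ᵐ x ∂μ, f x = 0) ↔ ∫ x, h x ∂μ = 0 := by
    rw [integral_eq_zero_iff_of_nonneg hh_nonneg hInt_h]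
    constructor
    · intro hae; filter_upwards [hae] with x hx
      simp [habs x, hx]
    · intro hae; filter_upwards [hae] with x hx
      have : |f x| = 0 := by rw [← habs x]; simpa using hx
      exact abs_eq_zero.mp this
  have hIntν : Integrable (fun φ => ‖(G (cplx f)) φ‖) ν := by
    have := (hν h hhB).1
    rwa [hre] at this
  have e2 : (∀ᵐ φ ∂ν, (G (cplx f)) φ = 0) ↔
      ∫ φ, ‖(G (cplx f)) φ‖ ∂ν = 0 := by
    rw [integral_eq_zero_iff_of_nonneg (fun φ => norm_nonneg _) hIntν]
    constructor
    · intro hae; filter_upwards [hae] with φ hφ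
      simp [hφ]
    · intro hae; filter_upwards [hae] with φ hφ
      exact norm_eq_zero.mp (by simpa using hφ)
  have heq : ∫ x, h x ∂μ = ∫ φ, ‖(G (cplx f)) φ‖ ∂ν := by
    rw [(hν h hhB).2, hre]
  rw [e1, e2, heq]
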